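/- arXiv:2309.02370 — 9 statements merged into one kernel-verified Lean document; each statement's English description precedes it below -/
import Mathlib

section
/- Let m ≥ 3 and let A be an (m−1)×m integer matrix. Let A′ be the bordered matrix of A and let B be the truncation of A. Then the degeneration vectors satisfy: d(A′)_j = −2·d(A)_j − d(B)_j for all 1 ≤ j ≤ m−1; d(A′)_m = −2·d(A)_m; and d(A′)_{m+1} = −d(A)_m. -/
def degVec {r : ℕ} (A : Matrix (Fin r) (Fin (r + 1)) ℤ) : Fin (r + 1) → ℤ :=
  fun j => (-1) ^ (j : ℕ) * (A.submatrix id j.succAbove).det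

def border {r : ℕ} (A : Matrix (Fin r) (Fin (r + 1)) ℤ) :
    Matrix (Fin (r + 1)) (Fin (r + 2)) ℤ :=
  Matrix.of fun i j =>
    if hi : (i : ℕ) < r then
      if hj : (j : ℕ) < r + 1 then A ⟨i, hi⟩ ⟨j, hj⟩
      else if (i : ℕ) = r - 1 then 1 else 0
    else
      if (j : ℕ) = r then 1 else if (j : ℕ) = r + 1 then -2 else 0

def trunc {r : ℕ} (A : Matrix (Fin (r + 1)) (Fin (r + 2)) ℤ) :
    Matrix (Fin r) (Fin (r + 1)) ℤ :=
  Matrix.of fun i j => A i.castSucc j.castSucc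

lemma succAbove_val {n : ℕ} (p : Fin (n+1)) (i : Fin n) :
    ((p.succAbove i : Fin (n+1)) : ℕ) = if (i:ℕ) < (p:ℕ) then (i:ℕ) else (i:ℕ)+1 := by
  rw [Fin.succAbove]
  split_ifs with h h' h' <;> simp_all [Fin.lt_def]

lemma border_lt {r : ℕ} (A : Matrix (Fin r) (Fin (r + 1)) ℤ) (i : Fin (r+1)) (j : Fin (r+2))
    (hi : (i:ℕ) < r) (hj : (j:ℕ) < r+1) : border A i j = A ⟨i, hi⟩ ⟨j, hj⟩ := by
  simp only [border, Matrix.of_apply, dif_pos hi, dif_pos hj]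

lemma border_lastcol {r : ℕ} (A : Matrix (Fin r) (Fin (r + 1)) ℤ) (i : Fin (r+1)) (j : Fin (r+2))
    (hi : (i:ℕ) < r) (hj : (j:ℕ) = r+1) :
    border A i j = if (i:ℕ) = r - 1 then 1 else 0 := by
  simp [border, hi, hj]

lemma border_lastrow {r : ℕ} (A : Matrix (Fin r) (Fin (r + 1)) ℤ) (i : Fin (r+1)) (j : Fin (r+2))
    (hi : ¬ (i:ℕ) < r) :
    border A i j = if (j:ℕ) = r then 1 else if (j:ℕ) = r+1 then -2 else 0 := by
  simp [border, hi]

/-- Here `m = k + 3 ≥ 3`, `A` is an `(m-1) × m` integer matrix, `border A`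
is its bordered matrix and `trunc A` is its truncation.  Then (0-indexed) the
degeneration vectors satisfy `d(A')_j = -2·d(A)_j - d(B)_j` for `1 ≤ j ≤ m-1`,
`d(A')_m = -2·d(A)_m` and `d(A')_{m+1} = -d(A)_m`. -/
theorem stmt0 (k : ℕ) (A : Matrix (Fin (k + 2)) (Fin (k + 3)) ℤ) :
    (∀ j : Fin (k + 2),
      degVec (border A) (j.castSucc.castSucc) =
        -2 * degVec A j.castSucc - degVec (trunc A) j) ∧
    degVec (border A) ⟨k + 2, by omega⟩ = -2 * degVec A (Fin.last (k + 2)) ∧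
    degVec (border A) (Fin.last (k + 3)) = -degVec A (Fin.last (k + 2)) := by
  have hlast : ¬ ((Fin.last (k+2) : Fin (k+3)) : ℕ) < k + 2 := by simp
  refine ⟨?_, ?_, ?_⟩
  · -- case 1 : c = j.castSucc.castSucc
    intro j
    set c : Fin (k+4) := j.castSucc.castSucc with hc
    have hcval : (c : ℕ) = (j : ℕ) := rfl
    have hj2 : (j : ℕ) < k + 2 := j.isLt
    set N : Matrix (Fin (k+3)) (Fin (k+3)) ℤ := (border A).submatrix id c.succAbove with hN
    -- last-row entries of N
    have hrow : ∀ p : Fin (k+3), N (Fin.last (k+2)) p =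
        if (p:ℕ) = k+1 then 1 else if (p:ℕ) = k+2 then -2 else 0 := by
      intro p
      have hp := p.isLt
      rw [hN, Matrix.submatrix_apply, id_eq, border_lastrow A _ _ hlast, succAbove_val]
      split_ifs <;> omega
    -- minor at column position k+2
    have hM2 : N.submatrix Fin.castSucc Fin.castSucc
        = A.submatrix id (j.castSucc).succAbove := by
      ext a b
      simp only [hN, Matrix.submatrix_apply, id_eq]
      have h1 : ((a.castSucc : Fin (k+3)) : ℕ) < k + 2 := by simp
      have hv := succAbove_val c (b.castSucc)
      have h2 : ((c.succAbove b.castSucc : Fin (k+4)) : ℕ) < k + 3 := by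
        rw [hv]; have := b.isLt; split_ifs <;> simp <;> omega
      have ha : (⟨((a.castSucc : Fin (k+3)) : ℕ), h1⟩ : Fin (k+2)) = a :=
        Fin.ext (by simp)
      have hb : (⟨((c.succAbove b.castSucc : Fin (k+4)) : ℕ), h2⟩ : Fin (k+3))
          = (j.castSucc : Fin (k+3)).succAbove b := by
        refine Fin.ext ?_
        show ((c.succAbove b.castSucc : Fin (k+4)) : ℕ) = _
        rw [hv, succAbove_val]
        simp only [Fin.coe_castSucc, hcval]
      rw [border_lt A _ _ h1 h2, ha, hb]
    -- the other minor: its last column, and its inner minor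
    have hM1col : ∀ a : Fin (k+2),
        N.submatrix Fin.castSucc (((Fin.last (k+1)).castSucc : Fin (k+3)).succAbove)
          a (Fin.last (k+1)) =
        if (a:ℕ) = k+1 then 1 else 0 := by
      intro a
      simp only [hN, Matrix.submatrix_apply, id_eq]
      have h1 : ((a.castSucc : Fin (k+3)) : ℕ) < k + 2 := by simp
      have hvv : ((((Fin.last (k+1)).castSucc : Fin (k+3)).succAbove (Fin.last (k+1)) :
          Fin (k+3)) : ℕ) = k + 2 := by rw [succAbove_val]; simp
      have h2 : ((c.succAbove (((Fin.last (k+1)).castSucc : Fin (k+3)).succAbove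
          (Fin.last (k+1))) : Fin (k+4)) : ℕ) = k + 3 := by
        rw [succAbove_val, hvv]; split_ifs <;> omega
      rw [border_lastcol A _ _ h1 h2]
      have h3 : ((a.castSucc : Fin (k+3)) : ℕ) = (a : ℕ) := by simp
      rw [h3]
      split_ifs <;> omega
    have hM1inner : (N.submatrix Fin.castSucc
          (((Fin.last (k+1)).castSucc : Fin (k+3)).succAbove)).submatrix Fin.castSucc
          Fin.castSucc
        = (trunc A).submatrix id j.succAbove := by
      ext a b
      simp only [hN, Matrix.submatrix_apply, id_eq, trunc, Matrix.of_apply]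
      have hv1 : ((((Fin.last (k+1)).castSucc : Fin (k+3)).succAbove b.castSucc :
          Fin (k+3)) : ℕ) = (b:ℕ) := by
        rw [succAbove_val]; have := b.isLt
        simp only [Fin.coe_castSucc, Fin.val_last]
        split_ifs <;> omega
      have hv2 := succAbove_val c (((Fin.last (k+1)).castSucc : Fin (k+3)).succAbove b.castSucc)
      have h1 : ((a.castSucc.castSucc : Fin (k+3)) : ℕ) < k + 2 := by
        have := a.isLt; simp; omega
      have h2 : ((c.succAbove (((Fin.last (k+1)).castSucc : Fin (k+3)).succAbove b.castSucc) :
          Fin (k+4)) : ℕ) < k + 3 := by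
        rw [hv2, hv1]; have := b.isLt; split_ifs <;> omega
      have ha : (⟨((a.castSucc.castSucc : Fin (k+3)) : ℕ), h1⟩ : Fin (k+2))
          = a.castSucc := Fin.ext (by simp)
      have hb : (⟨((c.succAbove (((Fin.last (k+1)).castSucc : Fin (k+3)).succAbove b.castSucc)
            : Fin (k+4)) : ℕ), h2⟩ : Fin (k+3))
          = ((j.succAbove b : Fin (k+2)).castSucc : Fin (k+3)) := by
        refine Fin.ext ?_
        show ((c.succAbove (((Fin.last (k+1)).castSucc : Fin (k+3)).succAbove b.castSucc) :
            Fin (k+4)) : ℕ) = _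
        rw [hv2, hv1]
        simp only [Fin.coe_castSucc, hcval, succAbove_val]
      rw [border_lt A _ _ h1 h2, ha, hb]
    -- expand det N along the last row
    have hdet : N.det = -((trunc A).submatrix id j.succAbove).det
        - 2 * (A.submatrix id (j.castSucc).succAbove).det := by
      rw [Matrix.det_succ_row N (Fin.last (k+2))]
      rw [Fin.sum_univ_castSucc, Fin.sum_univ_castSucc]
      have hz : ∀ p : Fin (k+1),
          (-1:ℤ) ^ (((Fin.last (k+2) : Fin (k+3)) : ℕ)
              + ((p.castSucc.castSucc : Fin (k+3)) : ℕ))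
            * N (Fin.last (k+2)) (p.castSucc.castSucc)
            * ((N.submatrix (Fin.last (k+2)).succAbove
                (p.castSucc.castSucc).succAbove).det) = 0 := by
        intro p
        rw [hrow]
        have : (p:ℕ) < k + 1 := p.isLt
        have e : ((p.castSucc.castSucc : Fin (k+3)) : ℕ) = (p:ℕ) := by simp
        rw [e]
        split_ifs <;> first | omega | ring
      rw [Finset.sum_congr rfl (fun p _ => hz p), Finset.sum_const_zero, zero_add]
      rw [Fin.succAbove_last]
      have hr1 : N (Fin.last (k+2)) ((Fin.last (k+1)).castSucc) = 1 := by
        rw [hrow]; simp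
      have hr2 : N (Fin.last (k+2)) (Fin.last (k+2)) = -2 := by
        rw [hrow]; simp
      rw [hr1, hr2, hM2]
      -- compute det of the first minor by expanding along its last column
      have hdet1 : (N.submatrix Fin.castSucc
          (((Fin.last (k+1)).castSucc : Fin (k+3)).succAbove)).det
          = ((trunc A).submatrix id j.succAbove).det := by
        rw [Matrix.det_succ_column _ (Fin.last (k+1))]
        rw [Fin.sum_univ_castSucc]
        have hz2 : ∀ a : Fin (k+1),
            (-1:ℤ) ^ (((a.castSucc : Fin (k+2)) : ℕ) + ((Fin.last (k+1) : Fin (k+2)) : ℕ))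
              * (N.submatrix Fin.castSucc (((Fin.last (k+1)).castSucc : Fin (k+3)).succAbove))
                  a.castSucc (Fin.last (k+1))
              * (((N.submatrix Fin.castSucc
                  (((Fin.last (k+1)).castSucc : Fin (k+3)).succAbove)).submatrix
                  a.castSucc.succAbove (Fin.last (k+1)).succAbove).det) = 0 := by
          intro a
          rw [hM1col]
          have : (a:ℕ) < k + 1 := a.isLt
          have e : ((a.castSucc : Fin (k+2)) : ℕ) = (a:ℕ) := by simp
          split_ifs <;> first | omega | ring
        rw [Finset.sum_congr rfl (fun a _ => hz2 a), Finset.sum_const_zero, zero_add]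
        rw [hM1col, Fin.succAbove_last, hM1inner]
        have e4 : ((Fin.last (k+1) : Fin (k+2)) : ℕ) = k + 1 := rfl
        rw [e4]
        have s : (-1:ℤ) ^ (k + 1 + (k+1)) = 1 := Even.neg_one_pow ⟨k+1, by ring⟩
        simp [s]
      rw [hdet1]
      have e1 : (((Fin.last (k+1)).castSucc : Fin (k+3)) : ℕ) = k + 1 := by simp
      have e2 : ((Fin.last (k+2) : Fin (k+3)) : ℕ) = k + 2 := by simp
      rw [e1, e2]
      have s1 : (-1:ℤ) ^ (k + 2 + (k+1)) = -1 := Odd.neg_one_pow ⟨k+1, by ring⟩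
      have s2 : (-1:ℤ) ^ (k + 2 + (k+2)) = 1 := Even.neg_one_pow ⟨k+2, by ring⟩
      rw [s1, s2]
      ring
    show (-1:ℤ) ^ (c:ℕ) * N.det = _
    rw [hdet, hcval]
    unfold degVec
    simp only [Fin.coe_castSucc]
    ring
  · -- case 2 : c = ⟨k+2⟩
    set c : Fin (k+4) := ⟨k+2, by omega⟩ with hc
    have hcv : (c : ℕ) = k + 2 := rfl
    set N : Matrix (Fin (k+3)) (Fin (k+3)) ℤ := (border A).submatrix id c.succAbove with hN
    have hrow : ∀ p : Fin (k+3), N (Fin.last (k+2)) p =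
        if (p:ℕ) = k+2 then -2 else 0 := by
      intro p
      have hp := p.isLt
      rw [hN, Matrix.submatrix_apply, id_eq, border_lastrow A _ _ hlast, succAbove_val, hcv]
      split_ifs <;> omega
    have hM : N.submatrix Fin.castSucc Fin.castSucc
        = A.submatrix id (Fin.last (k+2)).succAbove := by
      ext a b
      simp only [hN, Matrix.submatrix_apply, id_eq]
      rw [Fin.succAbove_last]
      have h1 : ((a.castSucc : Fin (k+3)) : ℕ) < k + 2 := by simp
      have hv := succAbove_val c (b.castSucc)
      have h2 : ((c.succAbove b.castSucc : Fin (k+4)) : ℕ) < k + 3 := by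
        rw [hv, hcv]; have := b.isLt; split_ifs <;> simp <;> omega
      have ha : (⟨((a.castSucc : Fin (k+3)) : ℕ), h1⟩ : Fin (k+2)) = a :=
        Fin.ext (by simp)
      have hb : (⟨((c.succAbove b.castSucc : Fin (k+4)) : ℕ), h2⟩ : Fin (k+3))
          = b.castSucc := by
        refine Fin.ext ?_
        show ((c.succAbove b.castSucc : Fin (k+4)) : ℕ) = _
        rw [hv, hcv]
        have := b.isLt
        simp only [Fin.coe_castSucc]
        split_ifs <;> omega
      rw [border_lt A _ _ h1 h2, ha, hb]
    have hdet : N.det = -2 * (A.submatrix id (Fin.last (k+2)).succAbove).det := by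
      rw [Matrix.det_succ_row N (Fin.last (k+2))]
      rw [Fin.sum_univ_castSucc]
      have hz : ∀ p : Fin (k+2),
          (-1:ℤ) ^ (((Fin.last (k+2) : Fin (k+3)) : ℕ) + ((p.castSucc : Fin (k+3)) : ℕ))
            * N (Fin.last (k+2)) p.castSucc
            * ((N.submatrix (Fin.last (k+2)).succAbove (p.castSucc).succAbove).det) = 0 := by
        intro p
        rw [hrow]
        have : (p:ℕ) < k + 2 := p.isLt
        have e : ((p.castSucc : Fin (k+3)) : ℕ) = (p:ℕ) := by simp
        rw [e]
        split_ifs <;> first | omega | ring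
      rw [Finset.sum_congr rfl (fun p _ => hz p), Finset.sum_const_zero, zero_add]
      rw [Fin.succAbove_last]
      have hr : N (Fin.last (k+2)) (Fin.last (k+2)) = -2 := by rw [hrow]; simp
      rw [hr, hM]
      have e2 : ((Fin.last (k+2) : Fin (k+3)) : ℕ) = k + 2 := by simp
      rw [e2]
      have s2 : (-1:ℤ) ^ (k + 2 + (k+2)) = 1 := Even.neg_one_pow ⟨k+2, by ring⟩
      rw [s2, Fin.succAbove_last]
      ring
    show (-1:ℤ) ^ ((⟨k+2, by omega⟩ : Fin (k+4)) : ℕ) * N.det = _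
    rw [hdet]
    unfold degVec
    have e3 : ((Fin.last (k+2) : Fin (k+3)) : ℕ) = k + 2 := rfl
    rw [e3]
    show (-1:ℤ) ^ (k+2) * _ = _
    ring
  · -- case 3 : c = last
    set c : Fin (k+4) := Fin.last (k+3) with hc
    set N : Matrix (Fin (k+3)) (Fin (k+3)) ℤ := (border A).submatrix id c.succAbove with hN
    have hrow : ∀ p : Fin (k+3), N (Fin.last (k+2)) p =
        if (p:ℕ) = k+2 then 1 else 0 := by
      intro p
      have hp := p.isLt
      rw [hN, Matrix.submatrix_apply, id_eq, border_lastrow A _ _ hlast, succAbove_val]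
      have hcv : ((c : Fin (k+4)) : ℕ) = k + 3 := rfl
      rw [hcv]
      split_ifs <;> omega
    have hM : N.submatrix Fin.castSucc Fin.castSucc
        = A.submatrix id (Fin.last (k+2)).succAbove := by
      ext a b
      simp only [hN, Matrix.submatrix_apply, id_eq]
      rw [Fin.succAbove_last, Fin.succAbove_last]
      have h1 : ((a.castSucc : Fin (k+3)) : ℕ) < k + 2 := by simp
      have h2 : ((b.castSucc.castSucc : Fin (k+4)) : ℕ) < k + 3 := by
        simp only [Fin.coe_castSucc]; omega
      rw [border_lt A _ _ h1 h2]
      have ha : (⟨((a.castSucc : Fin (k+3)) : ℕ), h1⟩ : Fin (k+2)) = a :=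
        Fin.ext (by simp)
      have hb : (⟨((b.castSucc.castSucc : Fin (k+4)) : ℕ), h2⟩ : Fin (k+3))
          = b.castSucc := Fin.ext (by simp)
      rw [ha, hb]
    have hdet : N.det = (A.submatrix id (Fin.last (k+2)).succAbove).det := by
      rw [Matrix.det_succ_row N (Fin.last (k+2))]
      rw [Fin.sum_univ_castSucc]
      have hz : ∀ p : Fin (k+2),
          (-1:ℤ) ^ (((Fin.last (k+2) : Fin (k+3)) : ℕ) + ((p.castSucc : Fin (k+3)) : ℕ))
            * N (Fin.last (k+2)) p.castSucc
            * ((N.submatrix (Fin.last (k+2)).succAbove (p.castSucc).succAbove).det) = 0 := by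
        intro p
        rw [hrow]
        have : (p:ℕ) < k + 2 := p.isLt
        have e : ((p.castSucc : Fin (k+3)) : ℕ) = (p:ℕ) := by simp
        rw [e]
        split_ifs <;> first | omega | ring
      rw [Finset.sum_congr rfl (fun p _ => hz p), Finset.sum_const_zero, zero_add]
      rw [Fin.succAbove_last]
      have hr : N (Fin.last (k+2)) (Fin.last (k+2)) = 1 := by rw [hrow]; simp
      rw [hr, hM]
      have e2 : ((Fin.last (k+2) : Fin (k+3)) : ℕ) = k + 2 := by simp
      rw [e2]
      have s2 : (-1:ℤ) ^ (k + 2 + (k+2)) = 1 := Even.neg_one_pow ⟨k+2, by ring⟩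
      rw [s2, Fin.succAbove_last]
      ring
    show (-1:ℤ) ^ ((Fin.last (k+3) : Fin (k+4)) : ℕ) * N.det = _
    rw [hdet]
    unfold degVec
    have e3 : ((Fin.last (k+3) : Fin (k+4)) : ℕ) = k + 3 := rfl
    have e2 : ((Fin.last (k+2) : Fin (k+3)) : ℕ) = k + 2 := rfl
    rw [e3, e2, pow_succ]
    ring
end

section
/- Define vectors d_n ∈ ℤ^{(n+25)/2} for odd n ≥ 5 by: d_5 = (1,4,1,5,1,4,4,4,6,5,14,9,10,4,2); d_7 = −(1,6,1,7,1,6,6,6,8,7,20,13,14,6,4,2); and, for every odd n ≥ 5, d_{n+4} = −2·(d_{n+2},0) − (d_n,0,0) + (−1)^{(n+3)/2}·2·(0,…,0,1) in ℤ^{(n+33)/2}. Then for every odd n ≥ 5, d_n = (−1)^{(n−1)/2}·c(n). -/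
/-- For odd `n = 2t+5 ≥ 5`, the vector `c(n) ∈ ℤ^{(n+25)/2}`, namely
`(1, n-1, 1, n, 1, n-1, n-1, n-1, n+1, n, 3n-1, 2n-1, 2n, n-1, n-3, n-5, …, 4, 2)`. -/
def cK (t : ℕ) : Fin (t + 15) → ℤ := fun j =>
  let n : ℤ := 2 * t + 5
  if h : (j : ℕ) < 14 then
    ![1, n - 1, 1, n, 1, n - 1, n - 1, n - 1, n + 1, n,
      3 * n - 1, 2 * n - 1, 2 * n, n - 1] ⟨j, h⟩
  else n - 1 - 2 * ((j : ℕ) - 13)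

def cE (t k : ℕ) : ℤ :=
  let n : ℤ := 2 * t + 5
  if k = 0 then 1 else if k = 1 then n - 1 else if k = 2 then 1 else if k = 3 then n
  else if k = 4 then 1 else if k = 5 then n - 1 else if k = 6 then n - 1
  else if k = 7 then n - 1 else if k = 8 then n + 1 else if k = 9 then n
  else if k = 10 then 3 * n - 1 else if k = 11 then 2 * n - 1 else if k = 12 then 2 * n
  else if k = 13 then n - 1 else n - 1 - 2 * (k - 13)

lemma cK_eq (t : ℕ) (j : Fin (t+15)) : cK t j = cE t j := by
  obtain ⟨m, hm⟩ := j
  by_cases h : m < 14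
  · interval_cases m <;> rfl
  · simp only [cK, cE]
    rw [dif_neg h]
    rw [if_neg (by omega), if_neg (by omega), if_neg (by omega), if_neg (by omega),
      if_neg (by omega), if_neg (by omega), if_neg (by omega), if_neg (by omega),
      if_neg (by omega), if_neg (by omega), if_neg (by omega), if_neg (by omega),
      if_neg (by omega), if_neg (by omega)]

lemma cE_rec (t k : ℕ) : cE (t+2) k = 2 * cE (t+1) k - cE t k := by
  rcases lt_or_ge k 14 with h | h
  · interval_cases k <;> simp [cE] <;> push_cast <;> ring
  · have h13 : (13:ℕ) ≤ k := by omega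
    simp only [cE]
    rw [if_neg (by omega), if_neg (by omega)]
    repeat rw [if_neg (by omega : ¬ _ = _)]
    omega

lemma cE_ge (t k : ℕ) (h : 13 ≤ k) : cE t k = 2*t + 4 - 2*((k:ℤ) - 13) := by
  rcases eq_or_lt_of_le h with h' | h'
  · subst h'; simp [cE]; push_cast; ring
  · simp only [cE]
    repeat rw [if_neg (by omega : ¬ _ = _)]
    have : (13:ℕ) ≤ k := h
    push_cast [this]
    ring

/-- Writing odd `n ≥ 5` as `n = 2t + 5`, so that `(n+25)/2 = t + 15`,
`(n-1)/2 = t + 2` and `(n+3)/2 = t + 4`: if `d_t ∈ ℤ^{t+15}` satisfies the given initial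
conditions `d_5`, `d_7` and the recursion
`d_{n+4} = -2·(d_{n+2},0) - (d_n,0,0) + (-1)^{(n+3)/2}·2·(0,…,0,1)`,
then `d_n = (-1)^{(n-1)/2}·c(n)` for every odd `n ≥ 5`. -/
theorem stmt4 (d : ∀ t : ℕ, Fin (t + 15) → ℤ)
    (h5 : d 0 = ![1, 4, 1, 5, 1, 4, 4, 4, 6, 5, 14, 9, 10, 4, 2])
    (h7 : d 1 = -![1, 6, 1, 7, 1, 6, 6, 6, 8, 7, 20, 13, 14, 6, 4, 2])
    (hrec : ∀ t : ℕ,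
      d (t + 2) = (-2 : ℤ) • Fin.snoc (d (t + 1)) 0
        - Fin.snoc (Fin.snoc (d t) 0) 0
        + ((-1 : ℤ) ^ (t + 4) * 2) • Pi.single (Fin.last (t + 16)) 1) :
    ∀ t : ℕ, d t = ((-1 : ℤ) ^ (t + 2)) • cK t := by
  intro t
  induction t using Nat.twoStepInduction with
  | zero =>
    rw [h5]; decide
  | one =>
    rw [h7]; decide
  | more t ih1 ih2 =>
    rw [hrec t, ih1, ih2]
    funext j
    simp only [Pi.add_apply, Pi.sub_apply, Pi.smul_apply, smul_eq_mul]
    induction j using Fin.lastCases with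
    | last =>
      rw [Fin.snoc_last, Fin.snoc_last, Pi.single_eq_same]
      have : cK (t+2) (Fin.last (t+16)) = 2 := by
        rw [cK_eq]
        rw [show ((Fin.last (t+16) : Fin (t+17)) : ℕ) = (t+2) + 14 by simp only [Fin.val_last]]
        rw [cE_ge _ _ (by omega)]
        push_cast; ring
      rw [this]; ring
    | cast i =>
      rw [Fin.snoc_castSucc, Fin.snoc_castSucc,
        Pi.single_eq_of_ne (Fin.castSucc_lt_last i).ne]
      induction i using Fin.lastCases with
      | last =>
        rw [Fin.snoc_last]
        simp only [Pi.smul_apply, smul_eq_mul]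
        have h1 : cK (t+2) ((Fin.last (t+15)).castSucc) = 4 := by
          rw [cK_eq]
          rw [show (((Fin.last (t+15)).castSucc : Fin (t+17)) : ℕ) = t + 15 by simp]
          rw [cE_ge _ _ (by omega)]
          push_cast; ring
        have h2 : cK (t+1) (Fin.last (t+15)) = 2 := by
          rw [cK_eq]
          rw [show ((Fin.last (t+15) : Fin (t+16)) : ℕ) = t + 15 by simp]
          rw [cE_ge _ _ (by omega)]
          push_cast; ring
        rw [h1, h2]
        simp [pow_add]
        ring
      | cast k =>
        rw [Fin.snoc_castSucc]
        simp only [Pi.smul_apply, smul_eq_mul]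
        have e2 : cK (t+2) (k.castSucc.castSucc) = cE (t+2) (k : ℕ) := by
          rw [cK_eq]; simp
        have e1 : cK (t+1) (k.castSucc) = cE (t+1) (k : ℕ) := by
          rw [cK_eq]; simp
        have e0 : cK t k = cE t (k : ℕ) := cK_eq t k
        rw [e2, e1, e0, cE_rec]
        simp [pow_add]
        ring
end

section
/- For odd n ≥ 5 define e_n ∈ ℤ^{(n+25)/2} by e_n = (−1)^{(n−1)/2}·(1, 2, 1, 1, 1, n−2, 1, 2, n−2, 1, 1, 3, 4, 2, n−3, n−5, …, 4, 2), where the first 14 components of the unsigned vector are as listed and its (14+k)-th component equals n+1−2k for 1 ≤ k ≤ (n−3)/2. Then for every odd n ≥ 5, e_{n+4} = −2·(e_{n+2},0) − (e_n,0,0) + (−1)^{(n+3)/2}·2·(0,…,0,1) in ℤ^{(n+33)/2}. -/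
/-- For odd `n = 2t+5 ≥ 5`, the vector `e_n ∈ ℤ^{(n+25)/2}`, namely
`(-1)^{(n-1)/2}·(1, 2, 1, 1, 1, n-2, 1, 2, n-2, 1, 1, 3, 4, 2, n-3, n-5, …, 4, 2)`. -/
def eK (t : ℕ) : Fin (t + 15) → ℤ := fun j =>
  let n : ℤ := 2 * t + 5
  (-1) ^ (t + 2) *
    (if h : (j : ℕ) < 14 then
      ![1, 2, 1, 1, 1, n - 2, 1, 2, n - 2, 1, 1, 3, 4, 2] ⟨j, h⟩
    else n - 1 - 2 * ((j : ℕ) - 13))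

/-- Writing odd `n ≥ 5` as `n = 2t + 5` (so `(n-1)/2 = t+2` and
`(n+3)/2 = t+4`), the family `e_n` satisfies
`e_{n+4} = -2·(e_{n+2},0) - (e_n,0,0) + (-1)^{(n+3)/2}·2·(0,…,0,1)` in `ℤ^{(n+33)/2}`. -/
theorem stmt6 : ∀ t : ℕ,
    eK (t + 2) = (-2 : ℤ) • Fin.snoc (eK (t + 1)) 0
      - Fin.snoc (Fin.snoc (eK t) 0) 0
      + ((-1 : ℤ) ^ (t + 4) * 2) • Pi.single (Fin.last (t + 16)) 1 := by
  intro t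
  funext j
  simp only [Pi.add_apply, Pi.sub_apply, Pi.smul_apply, smul_eq_mul]
  refine Fin.lastCases ?_ (fun i => ?_) j
  · -- j = last
    simp only [Fin.snoc_last, Pi.single_eq_same, eK, Fin.val_last]
    rw [dif_neg (by omega)]
    push_cast
    ring
  · -- j = castSucc i
    simp only [Fin.snoc_castSucc]
    rw [Pi.single_eq_of_ne (Fin.castSucc_lt_last i).ne]
    refine Fin.lastCases ?_ (fun i' => ?_) i
    · -- i = last (t+15)
      simp only [Fin.snoc_last, eK, Fin.coe_castSucc, Fin.val_last]
      rw [dif_neg (by omega), dif_neg (by omega)]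
      push_cast
      ring
    · -- interior
      simp only [Fin.snoc_castSucc, eK, Fin.coe_castSucc]
      rcases lt_or_ge (i' : ℕ) 14 with h14 | h14
      · rw [dif_pos h14, dif_pos h14, dif_pos h14]
        obtain ⟨v, hv⟩ := i'
        simp only at h14 ⊢
        interval_cases v <;>
          · norm_num
            ring
      · rw [dif_neg (by omega), dif_neg (by omega), dif_neg (by omega)]
        push_cast
        ring
end

section
/- Define vectors d_n ∈ ℤ^{(n+34)/2} for even n ≥ 6 by: d_6 = −(13,7,7,1,6,8,6,12,6,12,21,6,13,1,8,1,1,1,4,2); d_8 = (17,9,9,1,8,10,8,16,8,16,27,8,17,1,10,1,1,1,6,4,2); and, for every even n ≥ 6, d_{n+4} = −2·(d_{n+2},0) − (d_n,0,0) + (−1)^{(n+4)/2}·2·(0,…,0,1) in ℤ^{(n+42)/2}. Then for every even n ≥ 6, d_n = (−1)^{n/2}·c₂(n). -/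
/-- For even `n = 2t+6 ≥ 6`, the vector `c₂(n) ∈ ℤ^{(n+34)/2}`, namely
`(2n+1, n+1, n+1, 1, n, n+2, n, 2n, n, 2n, 3n+3, n, 2n+1, 1, n+2, 1, 1, 1, n-2, n-4, …, 4, 2)`. -/
def cJ2 (t : ℕ) : Fin (t + 20) → ℤ := fun j =>
  let n : ℤ := 2 * t + 6
  if h : (j : ℕ) < 18 then
    ![2 * n + 1, n + 1, n + 1, 1, n, n + 2, n, 2 * n, n, 2 * n,
      3 * n + 3, n, 2 * n + 1, 1, n + 2, 1, 1, 1] ⟨j, h⟩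
  else n - 2 * ((j : ℕ) - 17)

private lemma snoc_smul_aux {n : ℕ} (c : ℤ) (f : Fin n → ℤ) :
    (Fin.snoc (c • f) (0 : ℤ) : Fin (n + 1) → ℤ)
      = c • (Fin.snoc f (0 : ℤ) : Fin (n + 1) → ℤ) := by
  funext j
  induction j using Fin.lastCases with
  | last => simp
  | cast i => simp

private lemma cJ2_rec (t : ℕ) : cJ2 (t + 2) =
    (2 : ℤ) • Fin.snoc (cJ2 (t + 1)) 0
      - Fin.snoc (Fin.snoc (cJ2 t) 0) 0
      + (2 : ℤ) • Pi.single (Fin.last (t + 21)) 1 := by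
  funext j
  obtain ⟨jv, hjlt⟩ := j
  have hsingle : (Pi.single (Fin.last (t + 21)) (1 : ℤ) : Fin (t + 2 + 20) → ℤ) ⟨jv, hjlt⟩
      = if jv = t + 21 then 1 else 0 := by
    rw [Pi.single_apply]
    simp [Fin.ext_iff]
  simp only [Pi.add_apply, Pi.sub_apply, Pi.smul_apply, smul_eq_mul, Fin.snoc, cJ2,
    hsingle, Fin.coe_castLT, cast_eq]
  rcases lt_or_ge jv 18 with h18 | h18
  · have h1 : jv < t + 1 + 20 := by omega
    have h2 : jv < t + 20 + 1 := by omega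
    have h3 : jv < t + 20 := by omega
    have h4 : ¬ jv = t + 21 := by omega
    simp only [dif_pos h1, dif_pos h2, dif_pos h3, dif_pos h18, if_neg h4, Fin.coe_castLT,
      cast_eq]
    interval_cases jv <;>
      simp only [hsingle, if_neg h4, Matrix.cons_val_succ', Matrix.cons_val_zero'] <;>
      push_cast <;> ring
  · have hns : ¬ jv < 18 := by omega
    rcases Nat.lt_or_ge jv (t + 20) with hA | hA
    · have h1 : jv < t + 1 + 20 := by omega
      have h2 : jv < t + 20 + 1 := by omega
      have h4 : ¬ jv = t + 21 := by omega
      simp only [dif_pos h1, dif_pos h2, dif_pos hA, dif_neg hns, if_neg h4, Fin.coe_castLT,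
        cast_eq]
      have hc : (((jv - 17 : ℕ)) : ℤ) = (jv : ℤ) - 17 := by omega
      push_cast [hc]
      ring
    · rcases Nat.lt_or_ge jv (t + 21) with hB | hB
      · have h1 : jv < t + 1 + 20 := by omega
        have h2 : jv < t + 20 + 1 := by omega
        have hA' : ¬ jv < t + 20 := by omega
        have h4 : ¬ jv = t + 21 := by omega
        have hjv : jv = t + 20 := by omega
        simp only [dif_pos h1, dif_pos h2, dif_neg hA', dif_neg hns, if_neg h4, Fin.coe_castLT,
          cast_eq]
        have hc : (((jv - 17 : ℕ)) : ℤ) = (jv : ℤ) - 17 := by omega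
        subst hjv; push_cast; ring
      · have hjv : jv = t + 21 := by omega
        have h1 : ¬ jv < t + 1 + 20 := by omega
        have h2 : ¬ jv < t + 20 + 1 := by omega
        simp only [dif_neg h1, dif_neg h2, dif_neg hns, if_pos hjv, cast_eq]
        have hc : (((jv - 17 : ℕ)) : ℤ) = (jv : ℤ) - 17 := by omega
        push_cast [hc]
        subst hjv; push_cast; ring

private lemma cJ2_zero :
    cJ2 0 = ![13, 7, 7, 1, 6, 8, 6, 12, 6, 12, 21, 6, 13, 1, 8, 1, 1, 1, 4, 2] := by
  decide

private lemma cJ2_one :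
    cJ2 1 = ![17, 9, 9, 1, 8, 10, 8, 16, 8, 16, 27, 8, 17, 1, 10, 1, 1, 1, 6, 4, 2] := by
  decide

/-- Writing even `n ≥ 6` as `n = 2t + 6`, so that `(n+34)/2 = t + 20`,
`n/2 = t + 3` and `(n+4)/2 = t + 5`: if `d_t ∈ ℤ^{t+20}` satisfies the given initial
conditions `d_6`, `d_8` and the recursion
`d_{n+4} = -2·(d_{n+2},0) - (d_n,0,0) + (-1)^{(n+4)/2}·2·(0,…,0,1)`,
then `d_n = (-1)^{n/2}·c₂(n)` for every even `n ≥ 6`. -/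
theorem stmt9 (d : ∀ t : ℕ, Fin (t + 20) → ℤ)
    (h6 : d 0 = -![13, 7, 7, 1, 6, 8, 6, 12, 6, 12, 21, 6, 13, 1, 8, 1, 1, 1, 4, 2])
    (h8 : d 1 = ![17, 9, 9, 1, 8, 10, 8, 16, 8, 16, 27, 8, 17, 1, 10, 1, 1, 1, 6, 4, 2])
    (hrec : ∀ t : ℕ,
      d (t + 2) = (-2 : ℤ) • Fin.snoc (d (t + 1)) 0
        - Fin.snoc (Fin.snoc (d t) 0) 0
        + ((-1 : ℤ) ^ (t + 5) * 2) • Pi.single (Fin.last (t + 21)) 1) :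
    ∀ t : ℕ, d t = ((-1 : ℤ) ^ (t + 3)) • cJ2 t := by
  have key : ∀ t : ℕ, d t = ((-1 : ℤ) ^ (t + 3)) • cJ2 t ∧
      d (t + 1) = ((-1 : ℤ) ^ (t + 4)) • cJ2 (t + 1) := by
    intro t
    induction t with
    | zero =>
      constructor
      · rw [h6, cJ2_zero]; norm_num
      · rw [h8, cJ2_one]; norm_num
    | succ k ih =>
      refine ⟨ih.2, ?_⟩
      rw [hrec k, ih.1, ih.2, snoc_smul_aux, snoc_smul_aux, snoc_smul_aux, cJ2_rec]
      have e1 : ((-1 : ℤ) ^ (k + 1 + 4)) = -((-1 : ℤ) ^ (k + 4)) := by ring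
      have e2 : ((-1 : ℤ) ^ (k + 5)) = -((-1 : ℤ) ^ (k + 4)) := by ring
      have e3 : ((-1 : ℤ) ^ (k + 3)) = (-1 : ℤ) ^ (k + 4) * (-1) := by ring
      rw [e1, e3]
      funext j
      simp only [Pi.add_apply, Pi.sub_apply, Pi.smul_apply, Pi.neg_apply, smul_eq_mul]
      ring
  intro t
  rcases t with _ | t
  · exact (key 0).1
  · exact (key t).2
end

section
/- Let n ≥ 5 be odd and set N = (n+25)/2. Let δ = c(n) ∈ ℤ^N, and let I = (i_1,…,i_N) ∈ {0,1,∞}^N be the tuple (∞, 0, 0, 0, ∞, 0, 1, 1, 0, 0, ∞, 0, ∞, ∞, ∞) followed by (n−5)/2 entries equal to ∞. Define V ∈ ℤ^{2N} by (V_{2ν−1}, V_{2ν}) = δ_ν·ρ_{i_ν} for 1 ≤ ν ≤ N. Let 𝔪 ∈ ℤ^{2N} be zero except 𝔪_{20} = 𝔪_{23} = 𝔪_{28} = −1, and let 𝔩 ∈ ℤ^{2N} have first 28 entries (−1, −1, 1, −1, 0, −1, −1, 0, 0, 0, 1, −1, 0, −1, 1, 0, −1, 0, 0, 2n−7, −1,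 1, 2n−7, −1, 0, 0, 1, 2n−6) and all remaining entries zero. Then 𝔪 ∧ V = n and 𝔩 ∧ V = −(2n² − 10n + 2); in particular, −(𝔩 ∧ V)/(𝔪 ∧ V) = (2n² − 10n + 2)/n. -/
/-- Degeneration indices: the formal symbols `0`, `1`, `∞`. -/
inductive DegIdx : Type
  | zero
  | one
  | inf
  deriving DecidableEq

/-- `ρ₀ = (0,-1)`, `ρ₁ = (1,0)`, `ρ_∞ = (-1,1)`. -/
def rho : DegIdx → ℤ × ℤ
  | DegIdx.zero => (0, -1)
  | DegIdx.one => (1, 0)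
  | DegIdx.inf => (-1, 1)

/-- A vector in `ℤ^{2N}` is encoded as `Fin N → ℤ × ℤ`, the `ν`-th pair being the
`(2ν-1)`-th and `(2ν)`-th coordinates.  The pairing
`x ∧ y = ∑_{k=1}^{N} (x_{2k-1}·y_{2k} − x_{2k}·y_{2k-1})`. -/
def wedge {N : ℕ} (x y : Fin N → ℤ × ℤ) : ℤ :=
  ∑ k : Fin N, ((x k).1 * (y k).2 - (x k).2 * (y k).1)

/-- The meridian vector `𝔪 ∈ ℤ^{2N}`, `N = (n+25)/2`, of the triangulation of `K_n`
(`n = 2t+5`): zero except `𝔪₂₀ = 𝔪₂₃ = 𝔪₂₈ = -1`; in pair form, the 10th pair is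
`(0,-1)`, the 12th pair is `(-1,0)` and the 14th pair is `(0,-1)` (1-indexed). -/
def meridK (t : ℕ) : Fin (t + 15) → ℤ × ℤ := fun ν =>
  if (ν : ℕ) = 9 then (0, -1)
  else if (ν : ℕ) = 11 then (-1, 0)
  else if (ν : ℕ) = 13 then (0, -1)
  else (0, 0)

/-- The longitude vector `𝔩 ∈ ℤ^{2N}` of the triangulation of `K_n` (`n = 2t+5`), whose
first 28 entries are
`(-1,-1,1,-1,0,-1,-1,0,0,0,1,-1,0,-1,1,0,-1,0,0,2n-7,-1,1,2n-7,-1,0,0,1,2n-6)`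
and all remaining entries zero, written in pair form. -/
def longK (t : ℕ) : Fin (t + 15) → ℤ × ℤ := fun ν =>
  let n : ℤ := 2 * t + 5
  if h : (ν : ℕ) < 14 then
    ![(-1, -1), (1, -1), (0, -1), (-1, 0), (0, 0), (1, -1), (0, -1),
      (1, 0), (-1, 0), (0, 2 * n - 7), (-1, 1), (2 * n - 7, -1), (0, 0),
      (1, 2 * n - 6)] ⟨ν, h⟩
  else (0, 0)

/-- The degeneration index list `I₁` for `K_n` (`n = 2t+5`):
`(∞, 0, 0, 0, ∞, 0, 1, 1, 0, 0, ∞, 0, ∞, ∞, ∞)` followed by `(n-5)/2 = t` entries `∞`. -/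
def I1K (t : ℕ) : Fin (t + 15) → DegIdx := fun ν =>
  if h : (ν : ℕ) < 15 then
    ![DegIdx.inf, DegIdx.zero, DegIdx.zero, DegIdx.zero, DegIdx.inf, DegIdx.zero,
      DegIdx.one, DegIdx.one, DegIdx.zero, DegIdx.zero, DegIdx.inf, DegIdx.zero,
      DegIdx.inf, DegIdx.inf, DegIdx.inf] ⟨ν, h⟩
  else DegIdx.inf

/-- The vector `V ∈ ℤ^{2N}` with `(V_{2ν-1}, V_{2ν}) = δ_ν · ρ_{i_ν}`, where `δ = c(n)`
and `I = I₁`. -/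
def V10 (t : ℕ) : Fin (t + 15) → ℤ × ℤ := fun ν => cK t ν • rho (I1K t ν)

lemma sum_head (t : ℕ) (f : Fin (t + 15) → ℤ) (h : ∀ ν : Fin (t + 15), 15 ≤ (ν : ℕ) → f ν = 0) :
    ∑ ν, f ν = ∑ k : Fin 15, f ⟨(k : ℕ), by omega⟩ := by
  have h15 : 15 + t = t + 15 := by omega
  rw [← Fin.sum_congr' f h15, Fin.sum_univ_add]
  have : ∀ i : Fin t, f (Fin.cast h15 (Fin.natAdd 15 i)) = 0 := by
    intro i; apply h; simp
  simp only [this, Finset.sum_const_zero, add_zero]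
  apply Finset.sum_congr rfl
  intro i _
  congr 1

/-- For odd `n = 2t+5 ≥ 5`:  `𝔪 ∧ V = n`, `𝔩 ∧ V = -(2n² - 10n + 2)`, and
`-(𝔩 ∧ V)/(𝔪 ∧ V) = (2n² - 10n + 2)/n`. -/
theorem stmt10 (t : ℕ) :
    wedge (meridK t) (V10 t) = 2 * (t : ℤ) + 5 ∧
    wedge (longK t) (V10 t) =
      -(2 * (2 * (t : ℤ) + 5) ^ 2 - 10 * (2 * (t : ℤ) + 5) + 2) ∧
    ((-(wedge (longK t) (V10 t)) : ℤ) : ℚ) / ((wedge (meridK t) (V10 t) : ℤ) : ℚ) =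
      (2 * (2 * (t : ℚ) + 5) ^ 2 - 10 * (2 * (t : ℚ) + 5) + 2) / (2 * (t : ℚ) + 5) := by
  have hm : wedge (meridK t) (V10 t) = 2 * (t : ℤ) + 5 := by
    rw [wedge, sum_head]
    · simp [Fin.sum_univ_succ, meridK, V10, cK, I1K, rho]
      ring
    · intro ν hν
      have h9 : (ν : ℕ) ≠ 9 := by omega
      have h11 : (ν : ℕ) ≠ 11 := by omega
      have h13 : (ν : ℕ) ≠ 13 := by omega
      simp [meridK, h9, h11, h13]
  have hl : wedge (longK t) (V10 t) =
      -(2 * (2 * (t : ℤ) + 5) ^ 2 - 10 * (2 * (t : ℤ) + 5) + 2) := by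
    rw [wedge, sum_head]
    · simp [Fin.sum_univ_succ, longK, V10, cK, I1K, rho]
      ring
    · intro ν hν
      have h14 : ¬ ((ν : ℕ) < 14) := by omega
      simp [longK, h14]
  refine ⟨hm, hl, ?_⟩
  rw [hm, hl]
  have h5 : (2 * (t : ℚ) + 5) ≠ 0 := by positivity
  push_cast
  field_simp
end

section
/- Let n ≥ 5 be odd and set N = (n+25)/2. Let δ ∈ ℤ^N be the vector (1, 2, 1, 1, 1, n−2, 1, 2, n−2, 1, 1, 3, 4, 2, n−3, n−5, …, 4, 2), whose first 14 components are as listed and whose (14+k)-th component equals n+1−2k for 1 ≤ k ≤ (n−3)/2. Let I = (i_1,…,i_N) ∈ {0,1,∞}^N be the tuple (∞, ∞, 0, 0, ∞, 0, 1, ∞, ∞, 1, ∞, 1, ∞, ∞, ∞) followed by (n−5)/2 entries equal to ∞. Define V ∈ ℤ^{2N} by (V_{2ν−1}, V_{2ν}) = δ_ν·ρ_{i_ν}. Let 𝔪 ∈ ℤ^{2N} be zero except 𝔪_{20} = 𝔪_{23} = 𝔪_{28} = −1, and let 𝔩 ∈ ℤ^{2N} have first 28 entries (−1, −1, 1, −1,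 0, −1, −1, 0, 0, 0, 1, −1, 0, −1, 1, 0, −1, 0, 0, 2n−7, −1, 1, 2n−7, −1, 0, 0, 1, 2n−6) and all remaining entries zero. Then 𝔪 ∧ V = −1 and 𝔩 ∧ V = 6; in particular, −(𝔩 ∧ V)/(𝔪 ∧ V) = 6. -/
/-- For odd `n = 2t+5 ≥ 5`, the vector
`δ = (1, 2, 1, 1, 1, n-2, 1, 2, n-2, 1, 1, 3, 4, 2, n-3, n-5, …, 4, 2) ∈ ℤ^{(n+25)/2}`. -/
def delta11 (t : ℕ) : Fin (t + 15) → ℤ := fun j =>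
  let n : ℤ := 2 * t + 5
  if h : (j : ℕ) < 14 then
    ![1, 2, 1, 1, 1, n - 2, 1, 2, n - 2, 1, 1, 3, 4, 2] ⟨j, h⟩
  else n - 1 - 2 * ((j : ℕ) - 13)

/-- The degeneration index list `I₂` for `K_n` (`n = 2t+5`):
`(∞, ∞, 0, 0, ∞, 0, 1, ∞, ∞, 1, ∞, 1, ∞, ∞, ∞)` followed by `(n-5)/2 = t` entries `∞`. -/
def I2K (t : ℕ) : Fin (t + 15) → DegIdx := fun ν =>
  if h : (ν : ℕ) < 15 then
    ![DegIdx.inf, DegIdx.inf, DegIdx.zero, DegIdx.zero, DegIdx.inf, DegIdx.zero,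
      DegIdx.one, DegIdx.inf, DegIdx.inf, DegIdx.one, DegIdx.inf, DegIdx.one,
      DegIdx.inf, DegIdx.inf, DegIdx.inf] ⟨ν, h⟩
  else DegIdx.inf

/-- The vector `V ∈ ℤ^{2N}` with `(V_{2ν-1}, V_{2ν}) = δ_ν · ρ_{i_ν}`, where `I = I₂`. -/
def V11 (t : ℕ) : Fin (t + 15) → ℤ × ℤ := fun ν => delta11 t ν • rho (I2K t ν)


/-- ℕ-indexed mirror of `delta11`. -/
def deltaN (t i : ℕ) : ℤ :=
  if h : i < 14 then
    ![1, 2, 1, 1, 1, (2 * (t:ℤ) + 5) - 2, 1, 2, (2 * (t:ℤ) + 5) - 2, 1, 1, 3, 4, 2] ⟨i, h⟩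
  else (2 * (t:ℤ) + 5) - 1 - 2 * ((i:ℤ) - 13)

/-- ℕ-indexed mirror of `I2K`. -/
def idxN (i : ℕ) : DegIdx :=
  if h : i < 15 then
    ![DegIdx.inf, DegIdx.inf, DegIdx.zero, DegIdx.zero, DegIdx.inf, DegIdx.zero,
      DegIdx.one, DegIdx.inf, DegIdx.inf, DegIdx.one, DegIdx.inf, DegIdx.one,
      DegIdx.inf, DegIdx.inf, DegIdx.inf] ⟨i, h⟩
  else DegIdx.inf

/-- ℕ-indexed mirror of `V11`. -/
def VN (t i : ℕ) : ℤ × ℤ := deltaN t i • rho (idxN i)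

/-- ℕ-indexed mirror of `meridK`. -/
def meridN (i : ℕ) : ℤ × ℤ :=
  if i = 9 then (0, -1)
  else if i = 11 then (-1, 0)
  else if i = 13 then (0, -1)
  else (0, 0)

/-- ℕ-indexed mirror of `longK`. -/
def longN (t i : ℕ) : ℤ × ℤ :=
  if h : i < 14 then
    ![(-1, -1), (1, -1), (0, -1), (-1, 0), (0, 0), (1, -1), (0, -1),
      (1, 0), (-1, 0), (0, 2 * (2 * (t:ℤ) + 5) - 7), (-1, 1), (2 * (2 * (t:ℤ) + 5) - 7, -1), (0, 0),
      (1, 2 * (2 * (t:ℤ) + 5) - 6)] ⟨i, h⟩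
  else (0, 0)

/-- Summand of `wedge (meridK t) (V11 t)` as a function of a natural index. -/
def FM (t i : ℕ) : ℤ := (meridN i).1 * (VN t i).2 - (meridN i).2 * (VN t i).1

/-- Summand of `wedge (longK t) (V11 t)` as a function of a natural index. -/
def FL (t i : ℕ) : ℤ := (longN t i).1 * (VN t i).2 - (longN t i).2 * (VN t i).1

/-- For odd `n = 2t+5 ≥ 5`:  `𝔪 ∧ V = -1`, `𝔩 ∧ V = 6`, and
`-(𝔩 ∧ V)/(𝔪 ∧ V) = 6`. -/
theorem stmt11 (t : ℕ) :
    wedge (meridK t) (V11 t) = -1 ∧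
    wedge (longK t) (V11 t) = 6 ∧
    ((-(wedge (longK t) (V11 t)) : ℤ) : ℚ) /
      ((wedge (meridK t) (V11 t) : ℤ) : ℚ) = 6 := by
  have hm : wedge (meridK t) (V11 t) = -1 := by
    have h1 : wedge (meridK t) (V11 t) = ∑ i ∈ Finset.range (t + 15), FM t i :=
      Fin.sum_univ_eq_sum_range (FM t) (t + 15)
    rw [h1, show t + 15 = 15 + t from by omega, Finset.sum_range_add]
    have h2 : ∑ i ∈ Finset.range t, FM t (15 + i) = 0 := by
      refine Finset.sum_eq_zero fun i _ => ?_
      have h9 : 15 + i ≠ 9 := by omega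
      have h11 : 15 + i ≠ 11 := by omega
      have h13 : 15 + i ≠ 13 := by omega
      simp [FM, meridN, h9, h11, h13]
    rw [h2]
    norm_num [Finset.sum_range_succ, FM, meridN, VN, deltaN, idxN, rho]
  have hl : wedge (longK t) (V11 t) = 6 := by
    have h1 : wedge (longK t) (V11 t) = ∑ i ∈ Finset.range (t + 15), FL t i :=
      Fin.sum_univ_eq_sum_range (FL t) (t + 15)
    rw [h1, show t + 15 = 15 + t from by omega, Finset.sum_range_add]
    have h2 : ∑ i ∈ Finset.range t, FL t (15 + i) = 0 := by
      refine Finset.sum_eq_zero fun i _ => ?_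
      have h14 : ¬ 15 + i < 14 := by omega
      simp [FL, longN, h14]
    rw [h2]
    norm_num [Finset.sum_range_succ, FL, longN, VN, deltaN, idxN, rho]
    ring
  refine ⟨hm, hl, ?_⟩
  rw [hm, hl]
  norm_num
end

section
/- Let n ≥ 5 be odd and set N = (n+25)/2. Let δ ∈ ℤ^N be the vector (1, 2, 1, 1, 1, n−2, 1, 2, n−2, 1, 1, 2, 2, 1, n−3, n−5, …, 4, 2), whose first 14 components are as listed and whose (14+k)-th component equals n+1−2k for 1 ≤ k ≤ (n−3)/2. Let I = (i_1,…,i_N) ∈ {0,1,∞}^N be the tuple (∞, ∞, 0, 0, ∞, 0, 1, ∞, ∞, ∞, ∞, 1, ∞, 0, ∞) followed by (n−5)/2 entries equal to ∞. Define V ∈ ℤ^{2N} by (V_{2ν−1}, V_{2ν}) = δ_ν·ρ_{i_ν}. Let 𝔪 ∈ ℤ^{2N} be zero except 𝔪_{20} = 𝔪_{23} = 𝔪_{28} = −1, and let 𝔩 ∈ ℤ^{2N} have first 28 entries (−1, −1, 1, −1, 0, −1, −1, 0, 0, 0, 1, −1, 0, −1, 1, 0, −1, 0, 0, 2n−7,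 −1, 1, 2n−7, −1, 0, 0, 1, 2n−6) and all remaining entries zero. Then 𝔪 ∧ V = −1 and 𝔩 ∧ V = 0; in particular, −(𝔩 ∧ V)/(𝔪 ∧ V) = 0. -/
/-- For odd `n = 2t+5 ≥ 5`, the vector
`δ = (1, 2, 1, 1, 1, n-2, 1, 2, n-2, 1, 1, 2, 2, 1, n-3, n-5, …, 4, 2) ∈ ℤ^{(n+25)/2}`. -/
def delta12 (t : ℕ) : Fin (t + 15) → ℤ := fun j =>
  let n : ℤ := 2 * t + 5
  if h : (j : ℕ) < 14 then
    ![1, 2, 1, 1, 1, n - 2, 1, 2, n - 2, 1, 1, 2, 2, 1] ⟨j, h⟩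
  else n - 1 - 2 * ((j : ℕ) - 13)

/-- The degeneration index list `I₃` for `K_n` (`n = 2t+5`):
`(∞, ∞, 0, 0, ∞, 0, 1, ∞, ∞, ∞, ∞, 1, ∞, 0, ∞)` followed by `(n-5)/2 = t` entries `∞`. -/
def I3K (t : ℕ) : Fin (t + 15) → DegIdx := fun ν =>
  if h : (ν : ℕ) < 15 then
    ![DegIdx.inf, DegIdx.inf, DegIdx.zero, DegIdx.zero, DegIdx.inf, DegIdx.zero,
      DegIdx.one, DegIdx.inf, DegIdx.inf, DegIdx.inf, DegIdx.inf, DegIdx.one,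
      DegIdx.inf, DegIdx.zero, DegIdx.inf] ⟨ν, h⟩
  else DegIdx.inf

/-- The vector `V ∈ ℤ^{2N}` with `(V_{2ν-1}, V_{2ν}) = δ_ν · ρ_{i_ν}`, where `I = I₃`. -/
def V12 (t : ℕ) : Fin (t + 15) → ℤ × ℤ := fun ν => delta12 t ν • rho (I3K t ν)

lemma wedge_range {N : ℕ} (x y : Fin N → ℤ × ℤ) :
    wedge x y = ∑ k ∈ Finset.range N,
      if h : k < N then
        ((x ⟨k, h⟩).1 * (y ⟨k, h⟩).2 - (x ⟨k, h⟩).2 * (y ⟨k, h⟩).1) else 0 := by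
  rw [wedge, ← Fin.sum_univ_eq_sum_range (fun k =>
    if h : k < N then
      ((x ⟨k, h⟩).1 * (y ⟨k, h⟩).2 - (x ⟨k, h⟩).2 * (y ⟨k, h⟩).1) else 0)]
  exact Finset.sum_congr rfl fun i _ => by rw [dif_pos i.isLt]

/-- For odd `n = 2t+5 ≥ 5`:  `𝔪 ∧ V = -1`, `𝔩 ∧ V = 0`, and
`-(𝔩 ∧ V)/(𝔪 ∧ V) = 0`. -/
theorem stmt12 (t : ℕ) :
    wedge (meridK t) (V12 t) = -1 ∧
    wedge (longK t) (V12 t) = 0 ∧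
    ((-(wedge (longK t) (V12 t)) : ℤ) : ℚ) /
      ((wedge (meridK t) (V12 t) : ℤ) : ℚ) = 0 := by
  have hlt : ∀ k : ℕ, k < 15 → k < t + 15 := fun k hk => by omega
  have hsub : Finset.range 14 ⊆ Finset.range (t + 15) := Finset.range_subset_range.mpr (by omega)
  have hm : wedge (meridK t) (V12 t) = -1 := by
    rw [wedge_range, ← Finset.sum_subset hsub ?_]
    · simp only [Finset.sum_range_succ, Finset.sum_range_zero]
      norm_num [hlt, meridK, V12, delta12, I3K, rho]
    · intro k hk hk14
      simp only [Finset.mem_range, not_lt] at hk hk14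
      rw [dif_pos hk]
      simp [meridK, show k ≠ 9 by omega, show k ≠ 11 by omega, show k ≠ 13 by omega]
  have hl : wedge (longK t) (V12 t) = 0 := by
    rw [wedge_range, ← Finset.sum_subset hsub ?_]
    · simp only [Finset.sum_range_succ, Finset.sum_range_zero]
      norm_num [hlt, longK, V12, delta12, I3K, rho]
      ring
    · intro k hk hk14
      simp only [Finset.mem_range, not_lt] at hk hk14
      rw [dif_pos hk]
      simp [longK, show ¬ k < 14 by omega]
  refine ⟨hm, hl, ?_⟩
  rw [hm, hl]
  norm_num
end

section
/- Let n ≥ 6 be even and set N = (n+34)/2. Let δ = c₁(n) ∈ ℤ^N, and let I = (i_1,…,i_N) ∈ {0,1,∞}^N be the tuple (∞, ∞, 0, ∞, ∞, 0, 1, 0, 1, 0, 1, 0, ∞, 0, 1, ∞, 0, 0) followed by (n−2)/2 entries equal to 0. Define V ∈ ℤ^{2N} by (V_{2ν−1}, V_{2ν}) = δ_ν·ρ_{i_ν}. Let 𝔪 ∈ ℤ^{2N} be zero except 𝔪_9 = −1, 𝔪_{31} = 1, 𝔪_{32} = −1, 𝔪_{34} = 1, 𝔪_{35} = 1, and let 𝔩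 ∈ ℤ^{2N} have first 36 entries (1, −1, 1, −2, −1, 1, −1, 1, −8, −1, −1, 2, −2, 1, 1, −1, −2, 1, −1, 1, −2, 3, 0, −1, 0, 1, 0, 1, −1, −1, 10, −10, 1, 7, 7, 2) and all remaining entries zero. Then 𝔪 ∧ V = −n and 𝔩 ∧ V = −(14n − 2); in particular, −(𝔩 ∧ V)/(𝔪 ∧ V) = −(14n − 2)/n. -/
/-- For even `n = 2t+6 ≥ 6`, the vector `c₁(n) ∈ ℤ^{(n+34)/2}`, namely
`(2n-1, n, n, 1, n-1, n+1, n-1, 2n-1, n, 3n-2, 2n, n-1, n-1, n-1, 1, 1, 1, 1, n-2, n-4, …, 4, 2)`. -/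
def cJ1 (t : ℕ) : Fin (t + 20) → ℤ := fun j =>
  let n : ℤ := 2 * t + 6
  if h : (j : ℕ) < 18 then
    ![2 * n - 1, n, n, 1, n - 1, n + 1, n - 1, 2 * n - 1, n, 3 * n - 2,
      2 * n, n - 1, n - 1, n - 1, 1, 1, 1, 1] ⟨j, h⟩
  else n - 2 * ((j : ℕ) - 17)

/-- The meridian vector `𝔪 ∈ ℤ^{2N}`, `N = (n+34)/2`, of the triangulation of `J_n`
(`n = 2t+6`): zero except `𝔪₉ = -1`, `𝔪₃₁ = 1`, `𝔪₃₂ = -1`, `𝔪₃₄ = 1`, `𝔪₃₅ = 1`;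
in pair form, the 5th pair is `(-1,0)`, the 16th is `(1,-1)`, the 17th is `(0,1)` and
the 18th is `(1,0)` (1-indexed). -/
def meridJ (t : ℕ) : Fin (t + 20) → ℤ × ℤ := fun ν =>
  if (ν : ℕ) = 4 then (-1, 0)
  else if (ν : ℕ) = 15 then (1, -1)
  else if (ν : ℕ) = 16 then (0, 1)
  else if (ν : ℕ) = 17 then (1, 0)
  else (0, 0)

/-- The longitude vector `𝔩 ∈ ℤ^{2N}` of the triangulation of `J_n`, whose first 36
entries are `(1,-1,1,-2,-1,1,-1,1,-8,-1,-1,2,-2,1,1,-1,-2,1,-1,1,-2,3,0,-1,0,1,0,1,-1,-1,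
10,-10,1,7,7,2)` and all remaining entries zero, written in pair form. -/
def longJ (t : ℕ) : Fin (t + 20) → ℤ × ℤ := fun ν =>
  if h : (ν : ℕ) < 18 then
    ![(1, -1), (1, -2), (-1, 1), (-1, 1), (-8, -1), (-1, 2), (-2, 1),
      (1, -1), (-2, 1), (-1, 1), (-2, 3), (0, -1), (0, 1), (0, 1),
      (-1, -1), (10, -10), (1, 7), (7, 2)] ⟨ν, h⟩
  else (0, 0)

/-- The degeneration index list `I₁` for `J_n` (`n = 2t+6`):
`(∞, ∞, 0, ∞, ∞, 0, 1, 0, 1, 0, 1, 0, ∞, 0, 1, ∞, 0, 0)` followed by `(n-2)/2 = t+2`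
entries `0`. -/
def I1J (t : ℕ) : Fin (t + 20) → DegIdx := fun ν =>
  if h : (ν : ℕ) < 18 then
    ![DegIdx.inf, DegIdx.inf, DegIdx.zero, DegIdx.inf, DegIdx.inf, DegIdx.zero,
      DegIdx.one, DegIdx.zero, DegIdx.one, DegIdx.zero, DegIdx.one, DegIdx.zero,
      DegIdx.inf, DegIdx.zero, DegIdx.one, DegIdx.inf, DegIdx.zero, DegIdx.zero] ⟨ν, h⟩
  else DegIdx.zero

/-- The vector `V ∈ ℤ^{2N}` with `(V_{2ν-1}, V_{2ν}) = δ_ν · ρ_{i_ν}`, where `δ = c₁(n)`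
and `I = I₁`. -/
def V13 (t : ℕ) : Fin (t + 20) → ℤ × ℤ := fun ν => cJ1 t ν • rho (I1J t ν)

/-- For even `n = 2t+6 ≥ 6`:  `𝔪 ∧ V = -n`, `𝔩 ∧ V = -(14n - 2)`, and
`-(𝔩 ∧ V)/(𝔪 ∧ V) = -(14n - 2)/n`. -/
theorem stmt13 (t : ℕ) :
    wedge (meridJ t) (V13 t) = -(2 * (t : ℤ) + 6) ∧
    wedge (longJ t) (V13 t) = -(14 * (2 * (t : ℤ) + 6) - 2) ∧
    ((-(wedge (longJ t) (V13 t)) : ℤ) : ℚ) / ((wedge (meridJ t) (V13 t) : ℤ) : ℚ) =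
      -(14 * (2 * (t : ℚ) + 6) - 2) / (2 * (t : ℚ) + 6) := by

  have key : ∀ x : Fin (t+20) → ℤ × ℤ, (∀ i : Fin (t+20), 18 ≤ (i:ℕ) → x i = 0) →
      wedge x (V13 t) = ∑ k : Fin 18,
        (fun m : ℕ => if h : m < t + 20 then
          ((x ⟨m,h⟩).1 * (V13 t ⟨m,h⟩).2 - (x ⟨m,h⟩).2 * (V13 t ⟨m,h⟩).1) else 0) (k : ℕ) := by
    intro x hx
    set g : ℕ → ℤ := fun m : ℕ => if h : m < t + 20 then
          ((x ⟨m,h⟩).1 * (V13 t ⟨m,h⟩).2 - (x ⟨m,h⟩).2 * (V13 t ⟨m,h⟩).1) else 0 with hg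
    have h1 : wedge x (V13 t) = ∑ m ∈ Finset.range (t+20), g m := by
      rw [wedge, ← Fin.sum_univ_eq_sum_range]
      refine Finset.sum_congr rfl fun i _ => ?_
      simp [hg, i.isLt]
    rw [h1, ← Finset.sum_subset (Finset.range_subset_range.2 (by omega : 18 ≤ t + 20))]
    · rw [← Fin.sum_univ_eq_sum_range]
    · intro m hmem hm
      simp only [Finset.mem_range, not_lt] at hm hmem
      have := hx ⟨m, hmem⟩ hm
      simp [hg, hmem, this]
  have hmV : wedge (meridJ t) (V13 t) = -(2 * (t : ℤ) + 6) := by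
    rw [key (meridJ t) (fun i hi => by simp only [meridJ]; rw [if_neg (by omega), if_neg (by omega), if_neg (by omega), if_neg (by omega)]; rfl)]
    have h20 : ∀ m : ℕ, m < 18 → m < t + 20 := by omega
    simp only [Fin.sum_univ_succ, Finset.univ_unique, Finset.sum_const,
      Fin.sum_univ_zero]
    norm_num [meridJ, V13, cJ1, I1J, rho, Fin.isValue]
    ring
  have hlV : wedge (longJ t) (V13 t) = -(14 * (2 * (t : ℤ) + 6) - 2) := by
    rw [key (longJ t) (fun i hi => by simp only [longJ]; rw [dif_neg (by omega)]; rfl)]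
    simp only [Fin.sum_univ_succ, Fin.sum_univ_zero]
    norm_num [longJ, V13, cJ1, I1J, rho, Fin.isValue]
    ring
  refine ⟨hmV, hlV, ?_⟩
  rw [hmV, hlV]
  have h6 : (2 * (t : ℚ) + 6) ≠ 0 := by positivity
  have h6' : (-(2*(t:ℚ)+6)) ≠ 0 := neg_ne_zero.2 h6
  push_cast
  rw [div_eq_div_iff h6' h6]
  ring
end

section
/- Let n ≥ 6 be even and set N = (n+34)/2. Let δ = c₂(n) ∈ ℤ^N, and let I = (i_1,…,i_N) ∈ {0,1,∞}^N be the tuple (∞, 1, 0, ∞, ∞, 0, 1, 0, 0, 0, 1, 0, ∞, ∞, 1, ∞, 0, 0) followed by (n−2)/2 entries equal to 0. Define V ∈ ℤ^{2N} by (V_{2ν−1}, V_{2ν}) = δ_ν·ρ_{i_ν}. Let 𝔪 ∈ ℤ^{2N} be zero except 𝔪_9 = −1, 𝔪_{31} = 1, 𝔪_{32} = −1, 𝔪_{34} = 1, 𝔪_{35} = 1, and let 𝔩 ∈ ℤ^{2N} have first 36 entries (1, −1, 1, −2, −1, 1, −1, 1, −8, −1, −1, 2, −2, 1, 1, −1,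 −2, 1, −1, 1, −2, 3, 0, −1, 0, 1, 0, 1, −1, −1, 10, −10, 1, 7, 7, 2) and all remaining entries zero. Then 𝔪 ∧ V = −(n+1) and 𝔩 ∧ V = −(10n + 8); in particular, −(𝔩 ∧ V)/(𝔪 ∧ V) = −(10n + 8)/(n + 1). -/
/-- The degeneration index list `I₂` for `J_n` (`n = 2t+6`):
`(∞, 1, 0, ∞, ∞, 0, 1, 0, 0, 0, 1, 0, ∞, ∞, 1, ∞, 0, 0)` followed by `(n-2)/2 = t+2`
entries `0`. -/
def I2J (t : ℕ) : Fin (t + 20) → DegIdx := fun ν =>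
  if h : (ν : ℕ) < 18 then
    ![DegIdx.inf, DegIdx.one, DegIdx.zero, DegIdx.inf, DegIdx.inf, DegIdx.zero,
      DegIdx.one, DegIdx.zero, DegIdx.zero, DegIdx.zero, DegIdx.one, DegIdx.zero,
      DegIdx.inf, DegIdx.inf, DegIdx.one, DegIdx.inf, DegIdx.zero, DegIdx.zero] ⟨ν, h⟩
  else DegIdx.zero

/-- The vector `V ∈ ℤ^{2N}` with `(V_{2ν-1}, V_{2ν}) = δ_ν · ρ_{i_ν}`, where `δ = c₂(n)`
and `I = I₂`. -/
def V14 (t : ℕ) : Fin (t + 20) → ℤ × ℤ := fun ν => cJ2 t ν • rho (I2J t ν)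


/-- Auxiliary: a wedge against a vector supported on the first 18 pairs reduces to a
sum over `Fin 18`. -/
lemma wedge_trunc {t : ℕ} (x : Fin (t + 20) → ℤ × ℤ)
    (hx : ∀ ν : Fin (t + 20), 18 ≤ (ν : ℕ) → x ν = (0, 0)) (y : Fin (t + 20) → ℤ × ℤ) :
    wedge x y = ∑ j : Fin 18,
      ((x (Fin.castLE (by omega) j)).1 * (y (Fin.castLE (by omega) j)).2
        - (x (Fin.castLE (by omega) j)).2 * (y (Fin.castLE (by omega) j)).1) := by
  classical
  rw [wedge]
  have h18' : 18 ≤ t + 20 := by omega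
  have he : ∑ j : Fin 18,
      ((x (Fin.castLE h18' j)).1 * (y (Fin.castLE h18' j)).2
        - (x (Fin.castLE h18' j)).2 * (y (Fin.castLE h18' j)).1)
      = ∑ k ∈ Finset.univ.map (Fin.castLEEmb h18'),
          ((x k).1 * (y k).2 - (x k).2 * (y k).1) := by
    rw [Finset.sum_map]
    rfl
  rw [he]
  apply (Finset.sum_subset (Finset.subset_univ _) _).symm
  intro k _ hk
  have h18 : 18 ≤ (k : ℕ) := by
    by_contra h
    push_neg at h
    exact hk (Finset.mem_map.mpr ⟨⟨(k : ℕ), h⟩, Finset.mem_univ _, by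
      simp [Fin.castLEEmb, Fin.castLE, Fin.ext_iff]⟩)
  rw [hx k h18]
  ring

lemma castLE_nat_lt {t : ℕ} (j : Fin 18) :
    ((Fin.castLE (by omega : 18 ≤ t + 20) j : Fin (t + 20)) : ℕ) < 18 := j.isLt

set_option maxHeartbeats 1000000 in
/-- For even `n = 2t+6 ≥ 6`:  `𝔪 ∧ V = -(n+1)`, `𝔩 ∧ V = -(10n + 8)`, and
`-(𝔩 ∧ V)/(𝔪 ∧ V) = -(10n + 8)/(n + 1)`. -/
theorem stmt14 (t : ℕ) :
    wedge (meridJ t) (V14 t) = -((2 * (t : ℤ) + 6) + 1) ∧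
    wedge (longJ t) (V14 t) = -(10 * (2 * (t : ℤ) + 6) + 8) ∧
    ((-(wedge (longJ t) (V14 t)) : ℤ) : ℚ) / ((wedge (meridJ t) (V14 t) : ℤ) : ℚ) =
      -(10 * (2 * (t : ℚ) + 6) + 8) / ((2 * (t : ℚ) + 6) + 1) := by
  have hm : ∀ ν : Fin (t + 20), 18 ≤ (ν : ℕ) → meridJ t ν = (0, 0) := by
    intro ν h
    simp only [meridJ]
    rw [if_neg (by omega), if_neg (by omega), if_neg (by omega), if_neg (by omega)]
  have hl : ∀ ν : Fin (t + 20), 18 ≤ (ν : ℕ) → longJ t ν = (0, 0) := by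
    intro ν h
    simp only [longJ]
    rw [dif_neg (by omega)]
  have h1 : wedge (meridJ t) (V14 t) = -((2 * (t : ℤ) + 6) + 1) := by
    rw [wedge_trunc (meridJ t) hm (V14 t)]
    simp only [Fin.sum_univ_succ, Fin.sum_univ_zero, V14, cJ2, meridJ, I2J, rho,
      Fin.coe_castLE, Fin.val_succ, Fin.val_zero]
    norm_num [Matrix.cons_val_zero, Matrix.cons_val_succ, Prod.smul_def]
    ring
  have h2 : wedge (longJ t) (V14 t) = -(10 * (2 * (t : ℤ) + 6) + 8) := by
    rw [wedge_trunc (longJ t) hl (V14 t)]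
    simp only [Fin.sum_univ_succ, Fin.sum_univ_zero, V14, cJ2, longJ, I2J, rho,
      Fin.coe_castLE, Fin.val_succ, Fin.val_zero]
    norm_num [Matrix.cons_val_zero, Matrix.cons_val_succ, Prod.smul_def]
    ring
  refine ⟨h1, h2, ?_⟩
  have ht : (0 : ℚ) ≤ (t : ℚ) := Nat.cast_nonneg t
  rw [h1, h2]
  push_cast
  rw [div_eq_div_iff (by intro h; linarith) (by intro h; linarith)]
  ring
end
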